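/- Let $\mathbf{d} = (d_1,\dots,d_n)$ be nonnegative integers and $I_{\mathbf{d}} = (x_1^{d_1+1},\dots,x_n^{d_n+1}, x_1+\cdots+x_n)$. For any two-row rectangular semistandard tableau $T$ with entries in $\{1,\dots,n\}$ containing at most $d_i$ copies of $i$, the polynomial $f_T = \prod_{(a<b) \text{ column of } T} (x_a - x_b)$ lies in the Macaulay inverse system $I_{\mathbf{d}}^\perp$; that is, $g(\partial/\partial x_1, \dots, \partial/\partial x_n)(f_T) = 0$ for every $g \in I_{\mathbf{d}}$. -/

import Mathlib

open MvPolynomial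

/-- The differential operator `f(∂/∂x₁, …, ∂/∂xₙ)` applied to `g`:
the `⊙`-action `f ⊙ g`. -/
noncomputable def diffOp {n : ℕ} {F : Type*} [Field F]
    (f g : MvPolynomial (Fin n) F) : MvPolynomial (Fin n) F :=
  (AddMonoidAlgebra.coeff f).sum fun m c =>
    c • (List.finRange n).foldl (fun acc i => (fun h => pderiv i h)^[m i] acc) g

section Aux

variable {n : ℕ} {F : Type*} [Field F]

lemma pderiv_comm' (i j : Fin n) (f : MvPolynomial (Fin n) F) :
    pderiv i (pderiv j f) = pderiv j (pderiv i f) := by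
  induction f using MvPolynomial.induction_on' with
  | add p q hp hq => simp [hp, hq]
  | monomial m c =>
    rcases eq_or_ne i j with rfl | hij
    · rfl
    · simp only [pderiv_monomial]
      simp only [Finsupp.tsub_apply, Finsupp.single_eq_of_ne hij,
        Finsupp.single_eq_of_ne (Ne.symm hij), tsub_zero, tsub_right_comm]
      ring_nf

lemma iter_add (j : Fin n) (k : ℕ) (g g' : MvPolynomial (Fin n) F) :
    (⇑(pderiv j))^[k] (g + g') = (⇑(pderiv j))^[k] g + (⇑(pderiv j))^[k] g' := by
  induction k generalizing g g' with
  | zero => rfl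
  | succ k ih => simp only [Function.iterate_succ_apply, map_add, ih]

lemma iter_smul (j : Fin n) (k : ℕ) (c : F) (g : MvPolynomial (Fin n) F) :
    (⇑(pderiv j))^[k] (c • g) = c • (⇑(pderiv j))^[k] g := by
  induction k generalizing g with
  | zero => rfl
  | succ k ih => simp only [Function.iterate_succ_apply, Derivation.map_smul, ih]

lemma iter_zero (j : Fin n) (k : ℕ) :
    (⇑(pderiv j))^[k] (0 : MvPolynomial (Fin n) F) = 0 := by
  induction k with
  | zero => rfl
  | succ k ih => simp only [Function.iterate_succ_apply, map_zero, ih]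

lemma iter_comm (i j : Fin n) (k l : ℕ) (g : MvPolynomial (Fin n) F) :
    (⇑(pderiv i))^[k] ((⇑(pderiv j))^[l] g) = (⇑(pderiv j))^[l] ((⇑(pderiv i))^[k] g) :=
  ((Function.Commute.iterate_iterate (fun x => pderiv_comm' i j x) k l)) g

end Aux

section Foldl
variable {n : ℕ} {F : Type*} [Field F]

lemma foldl_add (L : List (Fin n)) (M : Fin n → ℕ) (g g' : MvPolynomial (Fin n) F) :
    L.foldl (fun acc i => (⇑(pderiv i))^[M i] acc) (g + g') =
      L.foldl (fun acc i => (⇑(pderiv i))^[M i] acc) g +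
      L.foldl (fun acc i => (⇑(pderiv i))^[M i] acc) g' := by
  induction L generalizing g g' with
  | nil => rfl
  | cons j L ih => simp only [List.foldl_cons, iter_add]; exact ih _ _

lemma foldl_smul (L : List (Fin n)) (M : Fin n → ℕ) (c : F) (g : MvPolynomial (Fin n) F) :
    L.foldl (fun acc i => (⇑(pderiv i))^[M i] acc) (c • g) =
      c • L.foldl (fun acc i => (⇑(pderiv i))^[M i] acc) g := by
  induction L generalizing g with
  | nil => rfl
  | cons j L ih => simp only [List.foldl_cons, iter_smul]; exact ih _

lemma foldl_zero (L : List (Fin n)) (M : Fin n → ℕ) :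
    L.foldl (fun acc i => (⇑(pderiv i))^[M i] acc) (0 : MvPolynomial (Fin n) F) = 0 := by
  induction L with
  | nil => rfl
  | cons j L ih => simp only [List.foldl_cons, iter_zero]; exact ih

lemma foldl_iter_comm (L : List (Fin n)) (M : Fin n → ℕ) (i : Fin n) (k : ℕ)
    (g : MvPolynomial (Fin n) F) :
    L.foldl (fun acc j => (⇑(pderiv j))^[M j] acc) ((⇑(pderiv i))^[k] g) =
      (⇑(pderiv i))^[k] (L.foldl (fun acc j => (⇑(pderiv j))^[M j] acc) g) := by
  induction L generalizing g with
  | nil => rfl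
  | cons j L ih =>
    simp only [List.foldl_cons]
    rw [iter_comm j i (M j) k g, ih]

lemma foldl_addM (L : List (Fin n)) (M M' : Fin n → ℕ) (g : MvPolynomial (Fin n) F) :
    L.foldl (fun acc i => (⇑(pderiv i))^[M i + M' i] acc) g =
      L.foldl (fun acc i => (⇑(pderiv i))^[M i] acc)
        (L.foldl (fun acc i => (⇑(pderiv i))^[M' i] acc) g) := by
  induction L generalizing g with
  | nil => rfl
  | cons j L ih =>
    simp only [List.foldl_cons]
    rw [Function.iterate_add_apply, ih, foldl_iter_comm]

lemma foldl_of_forall_zero (L : List (Fin n)) (M : Fin n → ℕ) (g : MvPolynomial (Fin n) F)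
    (h : ∀ j ∈ L, M j = 0) :
    L.foldl (fun acc i => (⇑(pderiv i))^[M i] acc) g = g := by
  induction L generalizing g with
  | nil => rfl
  | cons j L ih =>
    simp only [List.foldl_cons, h j (by simp), Function.iterate_zero_apply]
    exact ih _ fun j' hj' => h j' (by simp [hj'])

lemma foldl_single (L : List (Fin n)) (i : Fin n) (k : ℕ) (g : MvPolynomial (Fin n) F)
    (hi : i ∈ L) (hnd : L.Nodup) :
    L.foldl (fun acc j => (⇑(pderiv j))^[Finsupp.single i k j] acc) g =
      (⇑(pderiv i))^[k] g := by
  induction L generalizing g with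
  | nil => simp at hi
  | cons j L ih =>
    rcases List.nodup_cons.1 hnd with ⟨hjL, hnd'⟩
    simp only [List.foldl_cons]
    rcases eq_or_ne j i with rfl | hji
    · rw [Finsupp.single_eq_same]
      exact foldl_of_forall_zero _ _ _ fun j' hj' =>
        Finsupp.single_eq_of_ne (fun h => hjL (h ▸ hj'))
    · rw [Finsupp.single_eq_of_ne hji, Function.iterate_zero_apply]
      exact ih _ ((List.mem_cons.1 hi).resolve_left (fun h => hji h.symm)) hnd'

end Foldl

section DiffOp
variable {n : ℕ} {F : Type*} [Field F]

lemma diffOp_eq (f g : MvPolynomial (Fin n) F) :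
    diffOp f g = (AddMonoidAlgebra.coeff f).sum fun m c =>
      c • (List.finRange n).foldl (fun acc i => (⇑(pderiv i))^[m i] acc) g := rfl

lemma diffOp_zero_left (g : MvPolynomial (Fin n) F) : diffOp 0 g = 0 := by
  rw [diffOp_eq]; exact Finsupp.sum_zero_index

lemma diffOp_zero_right (f : MvPolynomial (Fin n) F) : diffOp f 0 = 0 := by
  rw [diffOp_eq]
  refine Finset.sum_eq_zero fun m _ => ?_
  simp only [foldl_zero, smul_zero]

lemma diffOp_monomial (m : Fin n →₀ ℕ) (c : F) (g : MvPolynomial (Fin n) F) :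
    diffOp (monomial m c) g =
      c • (List.finRange n).foldl (fun acc i => (⇑(pderiv i))^[m i] acc) g := by
  rw [diffOp_eq]
  exact Finsupp.sum_single_index (by rw [zero_smul])

lemma diffOp_add_left (f f' g : MvPolynomial (Fin n) F) :
    diffOp (f + f') g = diffOp f g + diffOp f' g := by
  rw [diffOp_eq, diffOp_eq, diffOp_eq]
  exact Finsupp.sum_add_index' (fun m => by rw [zero_smul]) (fun m c c' => add_smul _ _ _)

lemma diffOp_sum_left {α : Type*} (s : Finset α) (f : α → MvPolynomial (Fin n) F)
    (g : MvPolynomial (Fin n) F) :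
    diffOp (∑ i ∈ s, f i) g = ∑ i ∈ s, diffOp (f i) g := by
  classical
  induction s using Finset.induction_on with
  | empty => simp [diffOp_zero_left]
  | insert x s hx ih => rw [Finset.sum_insert hx, Finset.sum_insert hx, diffOp_add_left, ih]

lemma diffOp_monomial_mul (m : Fin n →₀ ℕ) (c : F) (f g : MvPolynomial (Fin n) F) :
    diffOp (monomial m c * f) g =
      c • (List.finRange n).foldl (fun acc i => (⇑(pderiv i))^[m i] acc) (diffOp f g) := by
  induction f using MvPolynomial.induction_on' with
  | monomial m' c' =>
    rw [monomial_mul, diffOp_monomial, diffOp_monomial, foldl_smul, smul_smul]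
    congr 1
    have : ∀ i : Fin n, (m + m') i = m i + m' i := fun i => Finsupp.add_apply m m' i
    rw [show (fun acc i => (⇑(pderiv i))^[(m + m') i] acc)
        = fun (acc : MvPolynomial (Fin n) F) i => (⇑(pderiv i))^[m i + m' i] acc by
      funext acc i; rw [this]]
    exact foldl_addM _ _ _ _
  | add p q hp hq =>
    rw [mul_add, diffOp_add_left, hp, hq, diffOp_add_left, foldl_add, smul_add]

lemma diffOp_mul (f f' g : MvPolynomial (Fin n) F) :
    diffOp (f * f') g = diffOp f (diffOp f' g) := by
  induction f using MvPolynomial.induction_on' with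
  | monomial m c => rw [diffOp_monomial_mul, diffOp_monomial]
  | add p q hp hq => rw [add_mul, diffOp_add_left, hp, hq, diffOp_add_left]

lemma diffOp_X_pow (i : Fin n) (k : ℕ) (g : MvPolynomial (Fin n) F) :
    diffOp (X i ^ k) g = (⇑(pderiv i))^[k] g := by
  rw [X_pow_eq_monomial, diffOp_monomial, one_smul]
  exact foldl_single _ _ _ _ (List.mem_finRange i) (List.nodup_finRange n)

lemma diffOp_X (i : Fin n) (g : MvPolynomial (Fin n) F) :
    diffOp (X i) g = pderiv i g := by
  rw [← pow_one (X i : MvPolynomial (Fin n) F), diffOp_X_pow, Function.iterate_one]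

end DiffOp

section Vanish
variable {n : ℕ} {F : Type*} [Field F]

lemma support_pderiv_le {q : MvPolynomial (Fin n) F} {i : Fin n} {t : ℕ}
    (h : ∀ m ∈ q.support, m i ≤ t + 1) :
    ∀ m ∈ (pderiv i q).support, m i ≤ t := by
  classical
  intro m hm
  rw [q.as_sum, map_sum] at hm
  obtain ⟨u, hu, hmu⟩ := Finset.mem_biUnion.1 (MvPolynomial.support_sum hm)
  rw [pderiv_monomial] at hmu
  have := MvPolynomial.support_monomial_subset hmu
  rw [Finset.mem_singleton] at this
  subst this
  rw [Finsupp.tsub_apply, Finsupp.single_eq_same]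
  have := h u hu
  omega

lemma iter_pderiv_eq_zero {q : MvPolynomial (Fin n) F} {i : Fin n} {t : ℕ}
    (h : degreeOf i q ≤ t) : (⇑(pderiv i))^[t + 1] q = 0 := by
  induction t generalizing q with
  | zero =>
    rw [Function.iterate_one]
    have h0 : ∀ m ∈ q.support, m i = 0 := fun m hm =>
      Nat.le_zero.1 ((degreeOf_le_iff.1 h) m hm)
    rw [q.as_sum, map_sum]
    refine Finset.sum_eq_zero fun m hm => ?_
    rw [pderiv_monomial, h0 m hm, Nat.cast_zero, mul_zero, monomial_zero]
  | succ t ih =>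
    rw [Function.iterate_succ_apply]
    exact ih (degreeOf_le_iff.2 (support_pderiv_le (degreeOf_le_iff.1 h)))

lemma degreeOf_prod_bound (i : Fin n) :
    ∀ (a b : List (Fin n)),
      degreeOf i (((a.zip b).map fun q =>
        (X q.1 - X q.2 : MvPolynomial (Fin n) F)).prod) ≤ a.count i + b.count i := by
  have hone : degreeOf i (1 : MvPolynomial (Fin n) F) = 0 := by
    rw [← C_1, degreeOf_C]
  have h3 : ∀ z : Fin n, degreeOf i (X z : MvPolynomial (Fin n) F) ≤ (if z = i then 1 else 0) := by
    intro z; rw [degreeOf_X]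
    rcases eq_or_ne i z with rfl | h
    · simp
    · simp [h, Ne.symm h]
  intro a
  induction a with
  | nil => intro b; simp [hone]
  | cons x a' ih =>
    intro b
    cases b with
    | nil => simp [hone]
    | cons y b' =>
      rw [List.zip_cons_cons, List.map_cons, List.prod_cons]
      refine le_trans (degreeOf_mul_le _ _ _) ?_
      have h1 : degreeOf i (X x - X y : MvPolynomial (Fin n) F) ≤
          (if x = i then 1 else 0) + (if y = i then 1 else 0) := by
        rw [sub_eq_add_neg]
        refine le_trans (degreeOf_add_le _ _ _) ?_
        have hy : (-(X y) : MvPolynomial (Fin n) F) = C (-1) * X y := by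
          rw [C_neg, C_1, neg_one_mul]
        have h2 : degreeOf i (-(X y) : MvPolynomial (Fin n) F) ≤ (if y = i then 1 else 0) := by
          rw [hy]
          exact le_trans (degreeOf_C_mul_le _ _ _) (h3 y)
        have h4 := h3 x
        omega
      have h5 := ih b'
      rw [List.count_cons, List.count_cons]
      simp only [beq_iff_eq]
      omega

lemma sum_pderiv_prod (L : List (Fin n × Fin n)) :
    ∑ i : Fin n, pderiv i ((L.map fun q =>
      (X q.1 - X q.2 : MvPolynomial (Fin n) F)).prod) = 0 := by
  induction L with
  | nil => simp
  | cons q L ih =>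
    rw [List.map_cons, List.prod_cons]
    simp only [pderiv_mul]
    rw [Finset.sum_add_distrib, ← Finset.sum_mul, ← Finset.mul_sum, ih, mul_zero, add_zero]
    have : ∑ i : Fin n, pderiv i (X q.1 - X q.2 : MvPolynomial (Fin n) F) = 0 := by
      classical
      simp only [map_sub, pderiv_X, Pi.single_apply]
      rw [Finset.sum_sub_distrib]
      rw [Finset.sum_ite_eq Finset.univ q.1 (fun _ => (1 : MvPolynomial (Fin n) F)),
        Finset.sum_ite_eq Finset.univ q.2 (fun _ => (1 : MvPolynomial (Fin n) F))]
      simp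
    rw [this, zero_mul]

end Vanish

/-- For a two-row rectangular semistandard tableau `T` with rows `a`, `b`,
entries in `Fin n`, and at most `dᵢ` copies of each entry `i`, the polynomial
`f_T = ∏_{(a<b) column of T} (x_a - x_b)` lies in the Macaulay inverse system
`I_𝐝^⊥` of `I_𝐝 = (x₁^{d₁+1},…,xₙ^{dₙ+1}, x₁+⋯+xₙ)`. -/
theorem fT_mem_inverseSystem
    {n : ℕ} (F : Type*) [Field F] [CharZero F]
    (d : Fin n → ℕ) (I : Ideal (MvPolynomial (Fin n) F))
    (hI : I = Ideal.span ({f | ∃ i : Fin n, f = X i ^ (d i + 1)} ∪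
        {∑ i : Fin n, X i}))
    (a b : List (Fin n))
    (hlen : a.length = b.length)
    (ha : List.Pairwise (· ≤ ·) a) (hb : List.Pairwise (· ≤ ·) b)
    (hcol : ∀ (m : ℕ) (hma : m < a.length) (hmb : m < b.length),
      a.get ⟨m, hma⟩ < b.get ⟨m, hmb⟩)
    (hcount : ∀ i : Fin n, a.count i + b.count i ≤ d i) :
    ∀ g ∈ I,
      diffOp g (((a.zip b).map fun q =>
        (X q.1 - X q.2 : MvPolynomial (Fin n) F)).prod) = 0 := by
  subst hI
  set p : MvPolynomial (Fin n) F :=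
    ((a.zip b).map fun q => (X q.1 - X q.2 : MvPolynomial (Fin n) F)).prod with hp
  intro g hg
  refine Submodule.span_induction (p := fun x _ => diffOp x p = 0) ?_ ?_ ?_ ?_ hg
  · rintro x (⟨i, rfl⟩ | rfl)
    · rw [diffOp_X_pow]
      exact iter_pderiv_eq_zero (le_trans (degreeOf_prod_bound i a b) (hcount i))
    · rw [diffOp_sum_left]
      calc (∑ i : Fin n, diffOp (X i) p) = ∑ i : Fin n, pderiv i p := by
            refine Finset.sum_congr rfl fun i _ => diffOp_X i p
        _ = 0 := sum_pderiv_prod _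
  · exact diffOp_zero_left p
  · intro x y _ _ hx hy
    rw [diffOp_add_left, hx, hy, add_zero]
  · intro c x _ hx
    rw [smul_eq_mul, diffOp_mul, hx, diffOp_zero_right]
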